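/- For every integer $k \geq 1$ one has $p(Z_k) = p(t_k) - \frac{n+1}{k!}\,\ell^{k-1}$ in $S$. (This is formula (3.4) of Claim 3.1 in the proof of Proposition 1.1: ${\pi_x}_* Z_k = {\pi_x}_*\mathrm{ev}_x^*\mathrm{ch}_k(X) - \frac{n+1}{k!} c_1(L_x)^{k-1}$.) -/

import Mathlib

/-- Formula (3.4) of Claim 3.1:
`π_* Z_k = π_* ev^* ch_k(X) - ((n+1)/k!) c₁(L_x)^(k-1)`, i.e.
`p (Z k) = p (t k) - ((n+1)/k!) ℓ^(k-1)` for `k ≥ 1`. -/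
theorem stmt_5 {R S : Type*} [CommRing R] [Algebra ℚ R] [CommRing S] [Algebra ℚ S]
    (σ L : R) (hσ : σ ^ 2 = -(σ * L))
    (n : ℕ) (t : ℕ → R) (ht0 : t 0 = (n : R)) (ht : ∀ j, 1 ≤ j → σ * t j = 0)
    (c : R) (hc : c = 2 * σ + L)
    (Z : ℕ → R)
    (hZ : ∀ k : ℕ, Z k = ∑ j ∈ Finset.range (k + 1),
      (((-1 : ℚ) ^ (k - j) / (k - j).factorial) •
        ((t j - ((j.factorial : ℚ)⁻¹ • c ^ j)) * σ ^ (k - j))))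
    (π : S →+* R) (ℓ : S) (hL : L = π ℓ)
    (p : R →+ S)
    (hproj : ∀ (a : S) (x : R), p (π a * x) = a * p x)
    (hpπ : ∀ a : S, p (π a) = 0) (hpσ : p σ = 1)
    (k : ℕ) (hk : 1 ≤ k) :
    p (Z k) = p (t k) - ((((n : ℚ) + 1) / k.factorial) • ℓ ^ (k - 1)) := by
  subst hc hL
  -- `π` commutes with rational scalars
  have hπa : ∀ q : ℚ, π (algebraMap ℚ S q) = algebraMap ℚ R q := by
    intro q
    have h : π.comp (algebraMap ℚ S) = algebraMap ℚ R := Subsingleton.elim _ _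
    exact DFunLike.congr_fun h q
  have hps : ∀ (q : ℚ) (x : R), p (q • x) = q • p x := by
    intro q x
    rw [Algebra.smul_def, ← hπa, hproj, ← Algebra.smul_def]
  -- powers of σ
  have hσm : ∀ m : ℕ, σ ^ (m + 1) = σ * (-(π ℓ)) ^ m := by
    intro m; induction m with
    | zero => simp
    | succ m ih => linear_combination σ * ih + (-(π ℓ)) ^ m * hσ
  have hcσ : ∀ j : ℕ, (2 * σ + π ℓ) ^ j * σ = σ * (-(π ℓ)) ^ j := by
    intro j; induction j with
    | zero => simp
    | succ j ih => linear_combination (2 * σ + π ℓ) * ih + 2 * (-(π ℓ)) ^ j * hσ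
  have hcpow : ∀ m : ℕ, (2 * σ + π ℓ) ^ (m + 1)
      = (π ℓ) ^ (m + 1) + σ * (π ℓ) ^ m + σ * (-(π ℓ)) ^ m := by
    intro m; induction m with
    | zero => simp; ring
    | succ m ih =>
      linear_combination (2 * σ + π ℓ) * ih + (2 * (π ℓ) ^ m + 2 * (-(π ℓ)) ^ m) * hσ
  -- pushforwards of the basic classes
  have hpl : ∀ m : ℕ, p ((π ℓ) ^ m) = 0 := by
    intro m; rw [← map_pow, hpπ]
  have hpσl : ∀ m : ℕ, p (σ * (-(π ℓ)) ^ m) = ((-1 : ℚ) ^ m) • ℓ ^ m := by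
    intro m
    have h1 : σ * (-(π ℓ)) ^ m = π ((-ℓ) ^ m) * σ := by rw [map_pow, map_neg]; ring
    rw [h1, hproj, hpσ, mul_one, neg_pow, Algebra.smul_def, map_pow, map_neg, map_one]
  have hpσl2 : ∀ m : ℕ, p (σ * (π ℓ) ^ m) = ℓ ^ m := by
    intro m
    have h1 : σ * (π ℓ) ^ m = π (ℓ ^ m) * σ := by rw [map_pow]; ring
    rw [h1, hproj, hpσ, mul_one]
  obtain ⟨K, rfl⟩ : ∃ K, k = K + 1 := ⟨k - 1, by omega⟩
  rw [hZ, map_sum, Finset.sum_range_succ]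
  -- the scalar coefficients of the terms with j ≤ K
  set q : ℕ → ℚ := fun j =>
    ((-1) ^ (K + 1 - j) / (K + 1 - j).factorial) *
      ((if j = 0 then (n : ℚ) * (-1) ^ K else 0) - (j.factorial : ℚ)⁻¹ * (-1) ^ K) with hq
  -- term-by-term computation for j ≤ K
  have hterm : ∀ j ∈ Finset.range (K + 1),
      p (((-1 : ℚ) ^ (K + 1 - j) / (K + 1 - j).factorial) •
        ((t j - ((j.factorial : ℚ)⁻¹ • (2 * σ + π ℓ) ^ j)) * σ ^ (K + 1 - j)))
        = q j • ℓ ^ K := by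
    intro j hj
    rw [Finset.mem_range] at hj
    have hm : K + 1 - j = (K - j) + 1 := by omega
    have hcs : (2 * σ + π ℓ) ^ j * σ ^ (K - j + 1) = σ * (-(π ℓ)) ^ K := by
      rw [hσm (K - j), show (2 * σ + π ℓ) ^ j * (σ * (-(π ℓ)) ^ (K - j))
          = ((2 * σ + π ℓ) ^ j * σ) * (-(π ℓ)) ^ (K - j) from by ring,
        hcσ j, mul_assoc, ← pow_add, show j + (K - j) = K from by omega]
    have hsplit : (t j - ((j.factorial : ℚ)⁻¹ • (2 * σ + π ℓ) ^ j)) * σ ^ (K - j + 1)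
        = t j * σ ^ (K - j + 1)
          - (j.factorial : ℚ)⁻¹ • ((2 * σ + π ℓ) ^ j * σ ^ (K - j + 1)) := by
      rw [sub_mul, smul_mul_assoc]
    rw [hm, hsplit, hcs]
    rcases Nat.eq_zero_or_pos j with hj0 | hj1
    · subst hj0
      have hK0 : K - 0 = K := by omega
      have hns : ∀ x : S, (n : S) * x = (n : ℚ) • x := fun x => by
        rw [Algebra.smul_def, map_natCast]
      rw [hK0, ht0, show ((n : R)) = π ((n : S)) from by rw [map_natCast],
        hps, map_sub, hproj, hps, hσm K, hpσl K, hns]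
      simp only [hq, if_pos rfl, Nat.sub_zero]
      match_scalars
      norm_num [Nat.factorial]
    · have htj : t j * σ ^ (K - j + 1) = 0 := by
        rw [show t j * σ ^ (K - j + 1) = σ ^ (K - j) * (σ * t j) from by ring,
          ht j hj1, mul_zero]
      rw [htj, zero_sub, hps, map_neg, hps, hpσl K]
      simp only [hq, if_neg (by omega : ¬ j = 0)]
      match_scalars
      rw [show (K + 1 - j) = K - j + 1 from by omega]
      ring
  rw [Finset.sum_congr rfl hterm, ← Finset.sum_smul]
  -- the last term (j = K + 1)
  have hlast : p (((-1 : ℚ) ^ (K + 1 - (K + 1)) / (K + 1 - (K + 1)).factorial) •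
      ((t (K + 1) - (((K + 1).factorial : ℚ)⁻¹ • (2 * σ + π ℓ) ^ (K + 1))) *
        σ ^ (K + 1 - (K + 1))))
      = p (t (K + 1)) - ((K + 1).factorial : ℚ)⁻¹ • (ℓ ^ K + ((-1 : ℚ) ^ K) • ℓ ^ K) := by
    simp only [Nat.sub_self, pow_zero, Nat.factorial_zero, Nat.cast_one, div_one, one_smul,
      mul_one]
    rw [map_sub, hps, hcpow K, map_add, map_add, hpl, hpσl2, hpσl, zero_add, smul_add]
  rw [hlast]
  -- the scalar identity
  have hsq : ∀ m : ℕ, ((-1 : ℚ) ^ m) * ((-1 : ℚ) ^ m) = 1 := by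
    intro m; rw [← pow_add, ← two_mul, pow_mul, neg_one_sq, one_pow]
  have halt : (∑ m ∈ Finset.range (K + 2), ((-1 : ℚ) ^ m * ((K + 1).choose m))) = 0 := by
    have h := Int.alternating_sum_range_choose_of_ne (n := K + 1) (by omega)
    exact_mod_cast congrArg (fun z : ℤ => (z : ℚ)) h
  have hrat : (∑ j ∈ Finset.range (K + 1), q j)
      = (1 + (-1 : ℚ) ^ K) / (K + 1).factorial - ((n : ℚ) + 1) / (K + 1).factorial := by
    rw [Finset.sum_range_succ']
    have hq0 : q 0 = (-(n : ℚ) + 1) / (K + 1).factorial := by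
      simp only [hq, if_pos rfl, Nat.sub_zero, Nat.factorial_zero, Nat.cast_one, inv_one,
        one_mul]
      have hf : ((K + 1).factorial : ℚ) ≠ 0 := by
        exact_mod_cast (K + 1).factorial_ne_zero
      field_simp
      simp only [if_true]
      linear_combination (-(((n : ℚ)) - 1)) * hsq K
    have hqi : ∀ i ∈ Finset.range K, q (i + 1)
        = ((-1 : ℚ) ^ (i + 1) * ((K + 1).choose (i + 1))) / (K + 1).factorial := by
      intro i hi
      rw [Finset.mem_range] at hi
      have h1 : K + 1 - (i + 1) = K - i := by omega
      have h2 : (((K + 1).choose (i + 1)) : ℚ)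
          = ((K + 1).factorial : ℚ) / (((i + 1).factorial : ℚ) * ((K - i).factorial : ℚ)) := by
        have := Nat.cast_choose (K := ℚ) (show i + 1 ≤ K + 1 by omega)
        rw [this, show K + 1 - (i + 1) = K - i from by omega]
      have hKi : (-1 : ℚ) ^ (K - i) = (-1 : ℚ) ^ K * (-1 : ℚ) ^ i := by
        have h3 : (-1 : ℚ) ^ (K - i) * (-1 : ℚ) ^ i = (-1 : ℚ) ^ K := by
          rw [← pow_add, show K - i + i = K from by omega]
        calc (-1 : ℚ) ^ (K - i) = (-1 : ℚ) ^ (K - i) * ((-1 : ℚ) ^ i * (-1 : ℚ) ^ i) := by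
              rw [hsq i, mul_one]
          _ = (-1 : ℚ) ^ K * (-1 : ℚ) ^ i := by rw [← mul_assoc, h3]
      simp only [hq, if_neg (Nat.succ_ne_zero i), h1, h2]
      have hf1 : ((K - i).factorial : ℚ) ≠ 0 := by
        exact_mod_cast (K - i).factorial_ne_zero
      have hf2 : (((i + 1).factorial) : ℚ) ≠ 0 := by
        exact_mod_cast (i + 1).factorial_ne_zero
      have hf3 : ((K + 1).factorial : ℚ) ≠ 0 := by
        exact_mod_cast (K + 1).factorial_ne_zero
      field_simp
      rw [hKi]
      linear_combination (-((-1 : ℚ) ^ i)) * hsq K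
    rw [Finset.sum_congr rfl hqi, hq0]
    have hsum : (∑ i ∈ Finset.range K, ((-1 : ℚ) ^ (i + 1) * ((K + 1).choose (i + 1))))
        = -1 - (-1 : ℚ) ^ (K + 1) := by
      have h := halt
      rw [Finset.sum_range_succ, Finset.sum_range_succ'] at h
      simp only [pow_zero, Nat.choose_zero_right, Nat.choose_self, Nat.cast_one, one_mul,
        mul_one] at h
      linarith [h]
    rw [← Finset.sum_div, hsum]
    have hf : ((K + 1).factorial : ℚ) ≠ 0 := by
      exact_mod_cast (K + 1).factorial_ne_zero
    field_simp
    ring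
  rw [hrat]
  have hKK : K + 1 - 1 = K := by omega
  rw [hKK]
  have hf : ((K + 1).factorial : ℚ) ≠ 0 := by
    exact_mod_cast (K + 1).factorial_ne_zero
  match_scalars
  · field_simp
    ring
  · ring
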